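/- For a prime power q, integers ℓ ≥ 4 and k ≥ 1, the number of tuples (v_1, ..., v_ℓ) ∈ (F_q^k)^ℓ such that each v_i is nonzero and v_i, v_{i+1} are linearly independent over F_q for all i (indices mod ℓ, so including the pair v_ℓ, v_1) equals (q^k - q)^ℓ + (-1)^ℓ (q-1)^{ℓ-1} (q^k - q). -/

import Mathlib

set_option linter.unusedSectionVars false

section QGraphicalAux

variable {F : Type*} [Field F] [Fintype F] {k : ℕ}

private theorem li_pair_iff' {M : Type*} [AddCommGroup M] [Module F M] {u : M}
    (hu : u ≠ 0) (v : M) :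
    LinearIndependent F ![u, v] ↔ v ∉ Submodule.span F {u} := by
  rw [LinearIndependent.pair_iff]
  constructor
  · rintro h hv
    rw [Submodule.mem_span_singleton] at hv
    obtain ⟨a, rfl⟩ := hv
    exact one_ne_zero ((h (-a) 1 (by rw [one_smul, neg_smul, neg_add_cancel])).2)
  · intro hv s t hst
    have ht : t = 0 := by
      by_contra ht
      apply hv
      rw [Submodule.mem_span_singleton]
      have h1 : t • v = -(s • u) := eq_neg_of_add_eq_zero_right hst
      exact ⟨-s / t, by
        rw [div_eq_mul_inv, mul_comm (-s) t⁻¹, mul_smul, neg_smul, ← h1,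
          inv_smul_smul₀ ht]⟩
    refine ⟨?_, ht⟩
    rw [ht, zero_smul, add_zero, smul_eq_zero] at hst
    exact hst.resolve_right hu

private theorem li_swap' {M : Type*} [AddCommGroup M] [Module F M] {u v : M} :
    LinearIndependent F ![u, v] ↔ LinearIndependent F ![v, u] := by
  rw [LinearIndependent.pair_iff, LinearIndependent.pair_iff]
  constructor <;>
    exact fun h s t hst => (h t s (by rw [add_comm]; exact hst)).symm

private theorem li_smul_right' {M : Type*} [AddCommGroup M] [Module F M] {u v : M} {c : F}
    (hc : c ≠ 0) :
    LinearIndependent F ![u, c • v] ↔ LinearIndependent F ![u, v] := by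
  rw [LinearIndependent.pair_iff, LinearIndependent.pair_iff]
  constructor
  · intro h s t hst
    obtain ⟨hs, ht⟩ := h s (t * c⁻¹)
      (by rw [smul_smul, mul_assoc, inv_mul_cancel₀ hc, mul_one]; exact hst)
    exact ⟨hs, (mul_eq_zero.mp ht).resolve_right (inv_ne_zero hc)⟩
  · intro h s t hst
    obtain ⟨hs, ht⟩ := h s (t * c) (by rw [mul_smul]; exact hst)
    exact ⟨hs, (mul_eq_zero.mp ht).resolve_right hc⟩

private theorem card_ne' {α : Type*} [Fintype α] (a : α) :
    Nat.card {x : α // x ≠ a} = Fintype.card α - 1 := by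
  classical
  rw [Nat.card_eq_fintype_card, Fintype.card_subtype_compl, Fintype.card_subtype_eq]

private theorem card_fiber' {u : Fin k → F} (hu : u ≠ 0) :
    Nat.card {v : Fin k → F // LinearIndependent F ![u, v]} =
      Fintype.card F ^ k - Fintype.card F := by
  classical
  rw [Nat.card_congr (Equiv.subtypeEquivRight fun v => li_pair_iff' hu v)]
  have h2 : Nat.card {v : Fin k → F // v ∈ Submodule.span F {u}} = Fintype.card F := by
    calc Nat.card {v : Fin k → F // v ∈ Submodule.span F {u}}
        = Nat.card F :=
          (Nat.card_congr (LinearEquiv.toSpanNonzeroSingleton F (Fin k → F) u hu).toEquiv).symm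
      _ = Fintype.card F := Nat.card_eq_fintype_card
  rw [Nat.card_eq_fintype_card, Fintype.card_subtype_compl, ← Nat.card_eq_fintype_card (α := {v : Fin k → F // v ∈ Submodule.span F {u}}), h2]
  congr 1
  simp [Fintype.card_fun]

abbrev PaSet (F : Type*) [Field F] (k n : ℕ) : Type _ :=
  {v : Fin (n + 1) → (Fin k → F) //
    (∀ i, v i ≠ 0) ∧ ∀ i : Fin n, LinearIndependent F ![v i.castSucc, v i.succ]}

abbrev CySet (F : Type*) [Field F] (k n : ℕ) : Type _ :=
  {p : PaSet F k n // LinearIndependent F ![p.1 (Fin.last n), p.1 0]}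

private theorem snoc_mem' {n : ℕ} (p : PaSet F k n) (w : Fin k → F)
    (hw : LinearIndependent F ![p.1 (Fin.last n), w]) :
    (∀ i, Fin.snoc (α := fun _ => Fin k → F) p.1 w i ≠ 0) ∧
      ∀ i : Fin (n + 1),
        LinearIndependent F ![Fin.snoc (α := fun _ => Fin k → F) p.1 w i.castSucc,
          Fin.snoc (α := fun _ => Fin k → F) p.1 w i.succ] := by
  constructor
  · intro i
    induction i using Fin.lastCases with
    | last =>
      rw [Fin.snoc_last]
      simpa using hw.ne_zero 1
    | cast i =>
      rw [Fin.snoc_castSucc]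
      exact p.2.1 i
  · intro i
    induction i using Fin.lastCases with
    | last =>
      rw [Fin.succ_last, Fin.snoc_last, Fin.snoc_castSucc]
      exact hw
    | cast i =>
      rw [Fin.succ_castSucc, Fin.snoc_castSucc, Fin.snoc_castSucc]
      exact p.2.2 i

private theorem init_mem' {n : ℕ} (v : Fin (n + 2) → (Fin k → F)) (hv : ∀ i, v i ≠ 0)
    (he : ∀ i : Fin (n + 1), LinearIndependent F ![v i.castSucc, v i.succ]) :
    (∀ i, Fin.init v i ≠ 0) ∧
      ∀ i : Fin n, LinearIndependent F ![Fin.init v i.castSucc, Fin.init v i.succ] := by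
  refine ⟨fun i => hv i.castSucc, fun i => ?_⟩
  have h := he i.castSucc
  rw [Fin.succ_castSucc] at h
  exact h

private theorem nat_card_sigma' {ι : Type*} [Fintype ι] {f : ι → Type*} [∀ i, Finite (f i)]
    (c : ℕ) (h : ∀ i, Nat.card (f i) = c) : Nat.card (Σ i, f i) = Nat.card ι * c := by
  classical
  letI : ∀ i, Fintype (f i) := fun i => Fintype.ofFinite _
  rw [Nat.card_eq_fintype_card, Fintype.card_sigma, Nat.card_eq_fintype_card]
  rw [Finset.sum_congr rfl fun i _ => by rw [← Nat.card_eq_fintype_card, h i]]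
  rw [Finset.sum_const, smul_eq_mul, Finset.card_univ]

private theorem card_Pa (n : ℕ) :
    Nat.card (PaSet F k n) =
      (Fintype.card F ^ k - 1) * (Fintype.card F ^ k - Fintype.card F) ^ n := by
  induction n with
  | zero =>
    have hcard : Fintype.card (Fin k → F) = Fintype.card F ^ k := by
      simp [Fintype.card_fun]
    rw [pow_zero, mul_one, ← hcard, ← card_ne' (0 : Fin k → F)]
    refine Nat.card_congr ?_
    exact
      { toFun := fun p => ⟨p.1 0, p.2.1 0⟩
        invFun := fun x => ⟨fun _ => x.1, fun _ => x.2, fun i => i.elim0⟩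
        left_inv := fun p => Subtype.ext (funext fun i => by rw [Fin.fin_one_eq_zero i])
        right_inv := fun x => rfl }
  | succ n ih =>
    classical
    have e : (Σ p : PaSet F k n,
        {w : Fin k → F // LinearIndependent F ![p.1 (Fin.last n), w]}) ≃
          PaSet F k (n + 1) := by
      refine Equiv.ofBijective
        (fun t => ⟨Fin.snoc t.1.1 t.2.1, snoc_mem' t.1 t.2.1 t.2.2⟩) ⟨?_, ?_⟩
      · rintro ⟨⟨v, hv⟩, ⟨w, hw⟩⟩ ⟨⟨v', hv'⟩, ⟨w', hw'⟩⟩ h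
        have h0 : Fin.snoc (α := fun _ => Fin k → F) v w =
            Fin.snoc (α := fun _ => Fin k → F) v' w' := congrArg Subtype.val h
        have h1 : v = v' := by
          have := congrArg Fin.init h0
          rwa [Fin.init_snoc, Fin.init_snoc] at this
        have h2 : w = w' := by
          have := congrArg (fun f => f (Fin.last (n + 1))) h0
          simpa [Fin.snoc_last] using this
        subst h1; subst h2; rfl
      · rintro ⟨v, hv, he⟩
        obtain ⟨h1, h2⟩ := init_mem' v hv he
        have hlast : LinearIndependent F ![Fin.init v (Fin.last n), v (Fin.last (n + 1))] := by
          have h := he (Fin.last n)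
          rwa [Fin.succ_last] at h
        exact ⟨⟨⟨Fin.init v, h1, h2⟩, ⟨v (Fin.last (n + 1)), hlast⟩⟩,
          Subtype.ext (Fin.snoc_init_self v)⟩
    rw [← Nat.card_congr e,
      nat_card_sigma' (Fintype.card F ^ k - Fintype.card F) (fun p => card_fiber' (p.2.1 _)),
      ih, pow_succ, mul_assoc]

private theorem card_split (n : ℕ) :
    Nat.card (PaSet F k n) =
      Nat.card (CySet F k n) +
        Nat.card {p : PaSet F k n // ¬LinearIndependent F ![p.1 (Fin.last n), p.1 0]} := by
  classical
  rw [← Nat.card_sum]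
  exact Nat.card_congr
    (Equiv.sumCompl fun p : PaSet F k n =>
      LinearIndependent F ![p.1 (Fin.last n), p.1 0]).symm

private theorem card_D (n : ℕ) :
    Nat.card {p : PaSet F k (n + 1) //
        ¬LinearIndependent F ![p.1 (Fin.last (n + 1)), p.1 0]} =
      Nat.card (CySet F k n) * (Fintype.card F - 1) := by
  classical
  have notli : ∀ (vv : Fin (n + 1) → (Fin k → F)) (c : F),
      ¬LinearIndependent F
        ![Fin.snoc (α := fun _ => Fin k → F) vv (c • vv 0) (Fin.last (n + 1)),
          Fin.snoc (α := fun _ => Fin k → F) vv (c • vv 0) 0] := by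
    intro vv c hli
    have h00 : Fin.snoc (α := fun _ => Fin k → F) vv (c • vv 0) 0 = vv 0 := by
      show Fin.snoc (α := fun _ => Fin k → F) vv (c • vv 0) (Fin.castSucc (0 : Fin (n + 1))) = vv 0
      rw [Fin.snoc_castSucc]
    rw [Fin.snoc_last, h00] at hli
    exact one_ne_zero
      ((LinearIndependent.pair_iff.mp hli 1 (-c)
        (by rw [one_smul, neg_smul, add_neg_cancel])).1)
  have e : CySet F k n × {c : F // c ≠ 0} ≃
      {p : PaSet F k (n + 1) // ¬LinearIndependent F ![p.1 (Fin.last (n + 1)), p.1 0]} := by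
    refine Equiv.ofBijective (fun t =>
      ⟨⟨Fin.snoc t.1.1.1 (t.2.1 • t.1.1.1 0),
        snoc_mem' t.1.1 _ ((li_smul_right' t.2.2).mpr t.1.2)⟩,
        notli t.1.1.1 t.2.1⟩) ⟨?_, ?_⟩
    · rintro ⟨⟨⟨v, hv⟩, hcyc⟩, ⟨c, hc⟩⟩ ⟨⟨⟨v', hv'⟩, hcyc'⟩, ⟨c', hc'⟩⟩ h
      have h0 : Fin.snoc (α := fun _ => Fin k → F) v (c • v 0) =
          Fin.snoc (α := fun _ => Fin k → F) v' (c' • v' 0) :=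
        congrArg (fun p => p.1.1) h
      have h1 : v = v' := by
        have := congrArg Fin.init h0
        rwa [Fin.init_snoc, Fin.init_snoc] at this
      subst h1
      have h2 : c • v 0 = c' • v 0 := by
        have := congrArg (fun f => f (Fin.last (n + 1))) h0
        simpa [Fin.snoc_last] using this
      have h3 : c = c' := by
        have h4 : (c - c') • v 0 = 0 := by rw [sub_smul, h2, sub_self]
        have := (smul_eq_zero.mp h4).resolve_right (hv.1 0)
        exact sub_eq_zero.mp this
      subst h3; rfl
    · rintro ⟨⟨v, hv, he⟩, hnli⟩
      have hmem : v (Fin.last (n + 1)) ∈ Submodule.span F {v 0} := by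
        by_contra hmem
        exact hnli (li_swap'.mp ((li_pair_iff' (hv 0) _).mpr hmem))
      rw [Submodule.mem_span_singleton] at hmem
      obtain ⟨c, hc⟩ := hmem
      have hc0 : c ≠ 0 := by
        rintro rfl
        rw [zero_smul] at hc
        exact hv (Fin.last (n + 1)) hc.symm
      obtain ⟨h1, h2⟩ := init_mem' v hv he
      have hcyc : LinearIndependent F
          ![Fin.init v (Fin.last n), Fin.init v 0] := by
        have h := he (Fin.last n)
        rw [Fin.succ_last, ← hc] at h
        exact (li_smul_right' hc0).mp h
      refine ⟨⟨⟨⟨Fin.init v, h1, h2⟩, hcyc⟩, ⟨c, hc0⟩⟩, ?_⟩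
      refine Subtype.ext (Subtype.ext ?_)
      show Fin.snoc (Fin.init v) (c • Fin.init v 0) = v
      have hval : Fin.snoc (Fin.init v) (c • Fin.init v 0) =
          Fin.snoc (Fin.init v) (v (Fin.last (n + 1))) := by
        rw [show (c • Fin.init v 0) = v (Fin.last (n + 1)) from hc]
      rw [hval, Fin.snoc_init_self]
  rw [← Nat.card_congr e, Nat.card_prod, card_ne' (0 : F)]

private theorem card_Cy (hk : 1 ≤ k) : ∀ n : ℕ, 1 ≤ n →
    (Nat.card (CySet F k n) : ℤ) =
      ((Fintype.card F : ℤ) ^ k - Fintype.card F) ^ (n + 1) +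
        (-1) ^ (n + 1) * ((Fintype.card F : ℤ) - 1) ^ n *
          ((Fintype.card F : ℤ) ^ k - Fintype.card F) := by
  have hq1 : 1 ≤ Fintype.card F := Fintype.card_pos
  have hqk1 : 1 ≤ Fintype.card F ^ k := Nat.one_le_pow _ _ hq1
  have hqq : Fintype.card F ≤ Fintype.card F ^ k :=
    Nat.le_self_pow (by omega) _
  intro n hn
  induction n, hn using Nat.le_induction with
  | base =>
    have etot : ∀ p : PaSet F k 1, LinearIndependent F ![p.1 (Fin.last 1), p.1 0] := by
      intro p
      have h := p.2.2 0
      rw [show ((0 : Fin 1).castSucc) = 0 from rfl, show (0 : Fin 1).succ = Fin.last 1 from rfl]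
        at h
      exact li_swap'.mp h
    rw [Nat.card_congr (Equiv.subtypeUnivEquiv etot), card_Pa]
    push_cast [Nat.cast_sub hqk1, Nat.cast_sub hqq]
    ring
  | succ n hn ih =>
    have h1 : (Nat.card (CySet F k (n + 1)) : ℤ) =
        (Nat.card (PaSet F k (n + 1)) : ℤ) -
          (Nat.card (CySet F k n) : ℤ) * ((Fintype.card F : ℤ) - 1) := by
      rw [card_split (n + 1), card_D n]
      push_cast [Nat.cast_sub hq1]
      ring
    rw [h1, card_Pa, ih]
    push_cast [Nat.cast_sub hqk1, Nat.cast_sub hqq]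
    ring

end QGraphicalAux

/-- For `ℓ ≥ 4` and `k ≥ 1`, the number of tuples `(v₁, …, v_ℓ)` of nonzero vectors
in `F_q^k`, indexed cyclically, with cyclically consecutive vectors linearly
independent, equals `(q^k - q)^ℓ + (-1)^ℓ (q-1)^{ℓ-1} (q^k - q)`. -/
theorem qGraphical_count_cycle {F : Type*} [Field F] [Fintype F]
    (q : ℕ) (hq : q = Fintype.card F) (ℓ k : ℕ) (hℓ : 4 ≤ ℓ) (hk : 1 ≤ k)
    [NeZero ℓ] :
    (Nat.card {v : ZMod ℓ → (Fin k → F) //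
        (∀ i, v i ≠ 0) ∧ ∀ i, LinearIndependent F ![v i, v (i + 1)]} : ℤ) =
      ((q : ℤ) ^ k - q) ^ ℓ + (-1) ^ ℓ * ((q : ℤ) - 1) ^ (ℓ - 1) * ((q : ℤ) ^ k - q) := by
  subst hq
  obtain ⟨m, rfl⟩ : ∃ m, ℓ = m + 1 := ⟨ℓ - 1, by omega⟩
  have hm : 1 ≤ m := by omega
  have key : Nat.card {v : ZMod (m + 1) → (Fin k → F) //
      (∀ i, v i ≠ 0) ∧ ∀ i, LinearIndependent F ![v i, v (i + 1)]} =
      Nat.card (CySet F k m) := by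
    refine Nat.card_congr ?_
    have iff1 : ∀ v : Fin (m + 1) → (Fin k → F),
        ((∀ i, v i ≠ 0) ∧ ∀ i : Fin (m + 1), LinearIndependent F ![v i, v (i + 1)]) ↔
          (((∀ i, v i ≠ 0) ∧
            ∀ i : Fin m, LinearIndependent F ![v i.castSucc, v i.succ]) ∧
            LinearIndependent F ![v (Fin.last m), v 0]) := by
      intro v
      constructor
      · rintro ⟨h0, h1⟩
        refine ⟨⟨h0, fun i => ?_⟩, ?_⟩
        · have h := h1 i.castSucc
          rwa [Fin.coeSucc_eq_succ] at h
        · have h := h1 (Fin.last m)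
          rwa [Fin.last_add_one] at h
      · rintro ⟨⟨h0, h1⟩, h2⟩
        refine ⟨h0, fun i => ?_⟩
        induction i using Fin.lastCases with
        | last => rwa [Fin.last_add_one]
        | cast i =>
          rw [Fin.coeSucc_eq_succ]
          exact h1 i
    have e1 : CySet F k m ≃
        {v : Fin (m + 1) → (Fin k → F) //
          ((∀ i, v i ≠ 0) ∧
            ∀ i : Fin m, LinearIndependent F ![v i.castSucc, v i.succ]) ∧
            LinearIndependent F ![v (Fin.last m), v 0]} :=
      Equiv.subtypeSubtypeEquivSubtypeInter
        (p := fun v : Fin (m + 1) → (Fin k → F) =>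
          (∀ i, v i ≠ 0) ∧ ∀ i : Fin m, LinearIndependent F ![v i.castSucc, v i.succ])
        (q := fun v => LinearIndependent F ![v (Fin.last m), v 0])
    exact (Equiv.subtypeEquivRight iff1).trans e1.symm
  rw [key, card_Cy hk m hm, Nat.add_sub_cancel]
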